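/- The function x parametrizing g = x(1+x+x²)/(1+4x+x²)² near g = 1/12 satisfies: if g = (1/12)(1 - a⁴ε⁴/36), then x = 1 - aε + a²ε²/2 - 5a³ε³/24 + a⁴ε⁴/12 + O(ε⁵) as ε → 0⁺ (taking the branch with 0 ≤ x ≤ 1). -/

import Mathlib

open Real Filter Asymptotics

set_option maxHeartbeats 1000000 in
private lemma stmt19_aux (u X : ℝ) (hu0 : 0 < u) (hu1 : u ≤ 1/10)
    (hx0 : 0 ≤ X) (hx1 : X ≤ 1)
    (hquad : (1 - u^2/6) * X^2 - (2 + 2*u^2/3) * X + (1 - u^2/6) = 0) :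
    |X - (1 - u + u^2/2 - 5*u^3/24 + u^4/12)| ≤ 2*u^5 := by
  have hu' : u ≤ 1 := by linarith
  have h72 : u ^ 7 ≤ u ^ 6 := pow_le_pow_of_le_one hu0.le hu' (by norm_num)
  have h82 : u ^ 8 ≤ u ^ 6 := pow_le_pow_of_le_one hu0.le hu' (by norm_num)
  have h92 : u ^ 9 ≤ u ^ 6 := pow_le_pow_of_le_one hu0.le hu' (by norm_num)
  have h102 : u ^ 10 ≤ u ^ 6 := pow_le_pow_of_le_one hu0.le hu' (by norm_num)
  have h21 : u ^ 2 ≤ u := by nlinarith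
  have h32 : u ^ 3 ≤ u ^ 2 := by nlinarith
  have h43 : u ^ 4 ≤ u ^ 3 := by nlinarith
  have h54 : u ^ 5 ≤ u ^ 4 := by nlinarith
  have h65 : u ^ 6 ≤ u ^ 5 := by nlinarith
  have hp2 : (0:ℝ) < u ^ 2 := pow_pos hu0 2
  have hp3 : (0:ℝ) < u ^ 3 := pow_pos hu0 3
  have hp4 : (0:ℝ) < u ^ 4 := pow_pos hu0 4
  have hp5 : (0:ℝ) < u ^ 5 := pow_pos hu0 5
  have hp6 : (0:ℝ) < u ^ 6 := pow_pos hu0 6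
  have hp7 : (0:ℝ) < u ^ 7 := pow_pos hu0 7
  have hp9 : (0:ℝ) < u ^ 9 := pow_pos hu0 9
  have key : (X - (1 - u + u^2/2 - 5*u^3/24 + u^4/12)) *
      ((1 - u^2/6) * (X + (1 - u + u^2/2 - 5*u^3/24 + u^4/12)) - (2 + 2*u^2/3)) =
      -(u ^ 6 * (-13/192 + u/36 - 49 * u ^ 2/3456 + 5 * u ^ 3/864 - u ^ 4/864)) := by
    linear_combination hquad
  have hM : (1 - u^2/6) * (X + (1 - u + u^2/2 - 5*u^3/24 + u^4/12)) - (2 + 2*u^2/3)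
      ≤ -(u/2) := by
    nlinarith [mul_le_mul_of_nonneg_left hx1 (show (0:ℝ) ≤ 1 - u^2/6 by nlinarith),
      h21, h32, h43, h54, h65, hp2, hp3, hp4, hp5, hp6]
  have hQP1 : -(u ^ 6) ≤
      -(u ^ 6 * (-13/192 + u/36 - 49 * u ^ 2/3456 + 5 * u ^ 3/864 - u ^ 4/864)) := by
    nlinarith [h72, h92, pow_pos hu0 8, pow_pos hu0 10, hp6]
  have hQP2 : -(u ^ 6 * (-13/192 + u/36 - 49 * u ^ 2/3456 + 5 * u ^ 3/864 - u ^ 4/864))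
      ≤ u ^ 6 := by
    nlinarith [h82, h102, hp7, hp9, hp6]
  rw [abs_le]
  constructor
  · by_contra h
    push_neg at h
    nlinarith [key, hQP2, mul_nonneg
      (show (0:ℝ) ≤ -(X - (1 - u + u^2/2 - 5*u^3/24 + u^4/12)) - 2*u^5 by linarith)
      (show (0:ℝ) ≤ -((1 - u^2/6) * (X + (1 - u + u^2/2 - 5*u^3/24 + u^4/12)) - (2 + 2*u^2/3)) - u/2 by linarith),
      mul_pos hu0 hp5]
  · by_contra h
    push_neg at h
    nlinarith [key, hQP1, mul_nonneg
      (show (0:ℝ) ≤ (X - (1 - u + u^2/2 - 5*u^3/24 + u^4/12)) - 2*u^5 by linarith)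
      (show (0:ℝ) ≤ -((1 - u^2/6) * (X + (1 - u + u^2/2 - 5*u^3/24 + u^4/12)) - (2 + 2*u^2/3)) - u/2 by linarith),
      mul_pos hu0 hp5]

set_option maxHeartbeats 1000000 in
/-- if x(ε) ∈ [0,1] parametrizes g = (1/12)(1 - a⁴ε⁴/36) via
g = x(1+x+x²)/(1+4x+x²)², then
x(ε) = 1 - aε + a²ε²/2 - 5a³ε³/24 + a⁴ε⁴/12 + O(ε⁵) as ε → 0⁺. -/
theorem stmt_19 (a : ℝ) (ha : 0 < a) (x : ℝ → ℝ)
    (hx : ∀ᶠ ε in nhdsWithin (0 : ℝ) (Set.Ioi 0),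
      x ε ∈ Set.Icc (0 : ℝ) 1 ∧
      x ε * (1 + x ε + x ε ^ 2) / (1 + 4 * x ε + x ε ^ 2) ^ 2 =
        (1 / 12) * (1 - a ^ 4 * ε ^ 4 / 36)) :
    (fun ε : ℝ => x ε -
        (1 - a * ε + a ^ 2 * ε ^ 2 / 2 - 5 * a ^ 3 * ε ^ 3 / 24 + a ^ 4 * ε ^ 4 / 12))
      =O[nhdsWithin 0 (Set.Ioi 0)] fun ε : ℝ => ε ^ 5 := by
  rw [isBigO_iff]
  refine ⟨2 * a ^ 5, ?_⟩
  have hδ : (0:ℝ) < 1 / (10 * a) := by positivity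
  have hmem : Set.Ioo (0:ℝ) (1 / (10 * a)) ∈ nhdsWithin (0:ℝ) (Set.Ioi 0) :=
    Ioo_mem_nhdsGT_of_mem ⟨le_refl _, hδ⟩
  filter_upwards [hx, hmem] with ε hε hεδ
  obtain ⟨⟨hx0, hx1⟩, heq⟩ := hε
  obtain ⟨hε0, hεu⟩ := hεδ
  have hu0 : 0 < a * ε := by positivity
  have hu1 : a * ε ≤ 1 / 10 := by
    have := (lt_div_iff₀ (show (0:ℝ) < 10 * a by positivity)).mp hεu
    nlinarith
  have hD : (0:ℝ) < 1 + 4 * x ε + x ε ^ 2 := by nlinarith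
  have hDne : (1 + 4 * x ε + x ε ^ 2) ^ 2 ≠ 0 := by positivity
  rw [div_eq_iff hDne] at heq
  have hA : (0:ℝ) ≤ (1 - x ε) ^ 2 := sq_nonneg _
  have hB : (0:ℝ) ≤ (1 + 4 * x ε + x ε ^ 2) * (a ^ 2 * ε ^ 2 / 6) := by positivity
  have hsq : (1 - x ε) ^ 2 = (1 + 4 * x ε + x ε ^ 2) * (a ^ 2 * ε ^ 2 / 6) := by
    have h4' : ((1 - x ε) ^ 2) ^ 2 = ((1 + 4 * x ε + x ε ^ 2) * (a ^ 2 * ε ^ 2 / 6)) ^ 2 := by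
      linear_combination -12 * heq
    exact (sq_eq_sq₀ hA hB).mp h4'
  have hquad : (1 - (a*ε)^2/6) * (x ε)^2 - (2 + 2*(a*ε)^2/3) * (x ε) + (1 - (a*ε)^2/6) = 0 := by
    linear_combination hsq
  have habs := stmt19_aux (a * ε) (x ε) hu0 hu1 hx0 hx1 hquad
  simp only [Real.norm_eq_abs]
  rw [abs_of_pos (show (0:ℝ) < ε ^ 5 by positivity)]
  calc ‖x ε - (1 - a * ε + a ^ 2 * ε ^ 2 / 2 - 5 * a ^ 3 * ε ^ 3 / 24 + a ^ 4 * ε ^ 4 / 12)‖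
      = |x ε - (1 - a*ε + (a*ε)^2/2 - 5*(a*ε)^3/24 + (a*ε)^4/12)| := by
        rw [Real.norm_eq_abs]; ring_nf
    _ ≤ 2 * (a*ε) ^ 5 := habs
    _ = 2 * a ^ 5 * ε ^ 5 := by ring
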